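/- Suppose K : [0,1] → ℝ is concave with K(1) = 0 and K(0) = γ_r, that γ_r ≥ γ, x_ε ≥ E(X), and G(I_{0 x_ε}) ≤ 0. Then for every b with 0 ≤ b < x_ε, the VaR-ratio of the truncated stop loss contract I_{0b} satisfies C_VaR(I_{0b}) = (γE(X) − ∫₀^b K(F(x)) dx) / (x_ε − b) ≤ γ_r. -/

import Mathlib

open MeasureTheory Set Filter

noncomputable section

/-- Truncated stop loss contract `I_{ab}` with cut-off points `a ≤ b`. -/
def Iab (a b x : ℝ) : ℝ := min (max (x - a) 0) (b - a)

/-- Admissible reinsurance function: `0 ≤ I x ≤ x` together with the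
incentive compatible (slope) condition. -/
def Admissible (I : ℝ → ℝ) : Prop :=
  (∀ x, 0 ≤ x → 0 ≤ I x ∧ I x ≤ x) ∧
    ∀ x₁ x₂, 0 ≤ x₁ → x₁ ≤ x₂ → 0 ≤ I x₂ - I x₁ ∧ I x₂ - I x₁ ≤ x₂ - x₁

/-- Pricing kernel `K(u) = ∫_u^1 (m v - 1) dv`. -/
def Ker (m : ℝ → ℝ) (u : ℝ) : ℝ := ∫ v in u..1, (m v - 1)

/-- Insurer's expected profit `G(I) = γ E(X) - ∫_0^∞ K(F x) I'(x) dx`. -/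
def Profit (γ EX : ℝ) (K F I : ℝ → ℝ) : ℝ :=
  γ * EX - ∫ x in Ioi (0:ℝ), K (F x) * deriv I x

/-- Value at Risk of the retained risk `R_I(X) = X - I(X)` at level `ε`,
given the `(1-ε)`-quantile `xε`. -/
def VaRRet (I : ℝ → ℝ) (xε : ℝ) : ℝ := xε - I xε

/-- Conditional Value at Risk of the retained risk:
`E(X | X ≥ xε) - I(xε) - (1/ε) ∫_{xε}^∞ (1 - F x) I'(x) dx`, where
`E(X | X ≥ xε) = xε + (1/ε) ∫_{xε}^∞ (1 - F x) dx`. -/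
def CVaRRet (F I : ℝ → ℝ) (ε xε : ℝ) : ℝ :=
  (xε + ε⁻¹ * ∫ x in Ioi xε, (1 - F x)) - I xε
    - ε⁻¹ * ∫ x in Ioi xε, (1 - F x) * deriv I x

/-- Full pricing kernel `K(u) = (1+γr) K₀(u) + γr (1-u)` built from a
normalized kernel `K₀`. -/
def KFull (K₀ : ℝ → ℝ) (γr u : ℝ) : ℝ := (1 + γr) * K₀ u + γr * (1 - u)

end

/-- The derivative of `Iab 0 c` equals `1` on `Ioo 0 c`. -/
lemma deriv_Iab_of_mem_Ioo {c x : ℝ} (hx : x ∈ Ioo (0:ℝ) c) :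
    deriv (Iab 0 c) x = 1 := by
  have h : Iab 0 c =ᶠ[nhds x] id := by
    filter_upwards [Ioo_mem_nhds hx.1 hx.2] with y hy
    simp only [Iab, sub_zero, id_eq]
    rw [max_eq_left hy.1.le, min_eq_left hy.2.le]
  rw [h.deriv_eq]
  exact deriv_id x

/-- The derivative of `Iab 0 c` equals `0` on `Ioi c` (for `0 ≤ c`). -/
lemma deriv_Iab_of_mem_Ioi {c x : ℝ} (hc : 0 ≤ c) (hx : x ∈ Ioi c) :
    deriv (Iab 0 c) x = 0 := by
  have h : Iab 0 c =ᶠ[nhds x] fun _ => c := by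
    filter_upwards [Ioi_mem_nhds hx] with y hy
    simp only [Iab, sub_zero]
    rw [max_eq_left (hc.trans hy.le), min_eq_right hy.le]
  rw [h.deriv_eq]
  exact deriv_const x c

/-- Computation of the profit integral for `Iab 0 c`. -/
lemma integral_K_deriv_Iab (K F : ℝ → ℝ) {c : ℝ} (hc : 0 ≤ c) :
    (∫ x in Ioi (0:ℝ), K (F x) * deriv (Iab 0 c) x) = ∫ x in (0:ℝ)..c, K (F x) := by
  have hb : ∀ᵐ x : ℝ, x ≠ c := by
    have : volume ({c} : Set ℝ) = 0 := measure_singleton c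
    simpa [ae_iff] using this
  have hae : (fun x => K (F x) * deriv (Iab 0 c) x) =ᵐ[volume.restrict (Ioi 0)]
      (Ioo 0 c).indicator (fun x => K (F x)) := by
    refine (ae_restrict_iff' measurableSet_Ioi).mpr ?_
    filter_upwards [hb] with x hxc hx0
    rcases lt_or_ge x c with h | h
    · rw [deriv_Iab_of_mem_Ioo ⟨hx0, h⟩, indicator_of_mem (show x ∈ Ioo (0:ℝ) c from ⟨hx0, h⟩)]
      ring
    · have hcx : c < x := lt_of_le_of_ne h (Ne.symm hxc)
      rw [deriv_Iab_of_mem_Ioi hc hcx, indicator_of_notMem (fun hmem => absurd hmem.2 (not_lt.mpr h))]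
      ring
  rw [integral_congr_ae hae, integral_indicator measurableSet_Ioo,
    Measure.restrict_restrict measurableSet_Ioo,
    inter_eq_left.mpr Ioo_subset_Ioi_self,
    intervalIntegral.integral_of_le hc, integral_Ioc_eq_integral_Ioo]

/-- The auxiliary inequality (e54a): under `γ_r ≥ γ`, `xε ≥ E(X)` and
`G(I_{0 xε}) ≤ 0`, every contract `I_{0b}` with `0 ≤ b < xε` has VaR-ratio
`(γ E(X) - ∫_0^b K(F x) dx)/(xε - b) ≤ γ_r`. -/
theorem lower_layer_ratio_le
    (F K : ℝ → ℝ) (γ γr ε xε : ℝ)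
    (hγ : 0 < γ) (hε : ε ∈ Ioo (0:ℝ) 1)
    (hF0 : F 0 = 0) (hFc : Continuous F) (hFm : StrictMonoOn F (Ici 0))
    (hFlim : Tendsto F atTop (nhds 1))
    (hEXint : IntegrableOn (fun x => 1 - F x) (Ioi 0))
    (hxε : 0 ≤ xε) (hq : F xε = 1 - ε)
    (hKconc : ConcaveOn ℝ (Icc 0 1) K)
    (hK1 : K 1 = 0) (hK0 : K 0 = γr)
    (hγr : γ ≤ γr)
    (hxεEX : (∫ x in Ioi (0:ℝ), (1 - F x)) ≤ xε)
    (hG0 : Profit γ (∫ x in Ioi (0:ℝ), (1 - F x)) K F (Iab 0 xε) ≤ 0) :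
    ∀ b : ℝ, 0 ≤ b → b < xε →
      Profit γ (∫ x in Ioi (0:ℝ), (1 - F x)) K F (Iab 0 b) / VaRRet (Iab 0 b) xε
          = (γ * (∫ x in Ioi (0:ℝ), (1 - F x)) - ∫ x in (0:ℝ)..b, K (F x)) / (xε - b) ∧
        (γ * (∫ x in Ioi (0:ℝ), (1 - F x)) - ∫ x in (0:ℝ)..b, K (F x)) / (xε - b) ≤ γr := by
  obtain ⟨hε0, hε1⟩ := hε
  set EX := ∫ x in Ioi (0:ℝ), (1 - F x) with hEXdef
  have hγr0 : 0 < γr := lt_of_lt_of_le hγ hγr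
  have hFmono : MonotoneOn F (Ici 0) := hFm.monotoneOn
  have hF_nonneg : ∀ x, 0 ≤ x → 0 ≤ F x := by
    intro x hx
    rw [← hF0]
    exact hFmono (mem_Ici.mpr le_rfl) (mem_Ici.mpr hx) hx
  have hF_le1 : ∀ x, 0 ≤ x → F x ≤ 1 := by
    intro x hx
    refine ge_of_tendsto hFlim ?_
    filter_upwards [eventually_ge_atTop x] with y hy
    exact hFmono (mem_Ici.mpr hx) (mem_Ici.mpr (hx.trans hy)) hy
  have hEX0 : 0 ≤ EX := by
    refine setIntegral_nonneg measurableSet_Ioi fun x hx => ?_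
    have := hF_le1 x (le_of_lt hx)
    linarith
  have h0mem : (0:ℝ) ∈ Icc (0:ℝ) 1 := ⟨le_rfl, zero_le_one⟩
  have h1mem : (1:ℝ) ∈ Icc (0:ℝ) 1 := ⟨zero_le_one, le_rfl⟩
  -- chord inequality
  have hchord : ∀ u ∈ Icc (0:ℝ) 1, γr * (1 - u) ≤ K u := by
    intro u hu
    have h := hKconc.2 h0mem h1mem (show (0:ℝ) ≤ 1 - u by linarith [hu.2]) hu.1 (show (1-u) + u = 1 by ring)
    simp only [smul_eq_mul, mul_zero, mul_one, zero_add, hK0, hK1, add_zero] at h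
    linarith
  have hKnn : ∀ u ∈ Icc (0:ℝ) 1, 0 ≤ K u := by
    intro u hu
    have := hchord u hu
    nlinarith [hu.2]
  -- concavity upper bound near 1, used for integrability
  have hupper : ∀ u ∈ Icc (0:ℝ) (1 - ε), ε * K u ≤ K (1 - ε) := by
    intro u hu
    have h1u : ε ≤ 1 - u := by linarith [hu.2]
    have h1u0 : (0:ℝ) < 1 - u := lt_of_lt_of_le hε0 h1u
    have humem : u ∈ Icc (0:ℝ) 1 := ⟨hu.1, by linarith⟩
    have h := hKconc.2 humem h1mem (div_nonneg hε0.le h1u0.le)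
      (show (0:ℝ) ≤ 1 - ε / (1 - u) by rw [sub_nonneg, div_le_one h1u0]; exact h1u)
      (show ε / (1 - u) + (1 - ε / (1 - u)) = 1 by ring)
    have hval : (ε / (1 - u)) * u + (1 - ε / (1 - u)) * 1 = 1 - ε := by
      field_simp
      ring
    simp only [smul_eq_mul, hK1, mul_zero, add_zero] at h
    rw [hval] at h
    have hKu0 : 0 ≤ K u := hKnn u humem
    have hstep : ε * K u ≤ ε / (1 - u) * K u := by
      apply mul_le_mul_of_nonneg_right _ hKu0
      rw [le_div_iff₀ h1u0]
      nlinarith [hu.1]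
    linarith
  -- if γr ≤ K v then γr ≤ K u for u ≤ v
  have hL3 : ∀ v ∈ Icc (0:ℝ) 1, γr ≤ K v → ∀ u ∈ Icc (0:ℝ) v, γr ≤ K u := by
    intro v hv hKv u hu
    rcases eq_or_lt_of_le hv.1 with h0 | h0
    · have hu0 : u = 0 := le_antisymm (hu.2.trans h0.symm.le) hu.1
      rw [hu0, hK0]
    · have hdiv0 : 0 ≤ u / v := div_nonneg hu.1 h0.le
      have hdiv1 : u / v ≤ 1 := by rw [div_le_one h0]; exact hu.2
      have h := hKconc.2 hv h0mem hdiv0 (show (0:ℝ) ≤ 1 - u / v by linarith) (show u / v + (1 - u / v) = 1 by ring)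
      simp only [smul_eq_mul, mul_zero, add_zero, hK0] at h
      rw [div_mul_cancel₀ u h0.ne'] at h
      nlinarith
  -- if K v ≤ γr then K u ≤ γr for v ≤ u ≤ 1
  have hL4 : ∀ v, 0 < v → v ≤ 1 → K v ≤ γr → ∀ u ∈ Icc v 1, K u ≤ γr := by
    intro v hv0 hv1 hKv u hu
    have hu0 : 0 < u := lt_of_lt_of_le hv0 hu.1
    have humem : u ∈ Icc (0:ℝ) 1 := ⟨hu0.le, hu.2⟩
    have hdiv0 : 0 ≤ v / u := div_nonneg hv0.le hu0.le
    have hdiv1 : v / u ≤ 1 := by rw [div_le_one hu0]; exact hu.1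
    have h := hKconc.2 humem h0mem hdiv0 (show (0:ℝ) ≤ 1 - v / u by linarith) (show v / u + (1 - v / u) = 1 by ring)
    simp only [smul_eq_mul, mul_zero, add_zero, hK0] at h
    rw [div_mul_cancel₀ v hu0.ne'] at h
    nlinarith [div_pos hv0 hu0]
  -- integrability of K ∘ F on (0, xε]
  have hInt : IntegrableOn (fun x => K (F x)) (Ioc 0 xε) := by
    have hKc : ContinuousOn K (Ioo 0 1) := by
      have := hKconc.continuousOn_interior
      rwa [interior_Icc] at this
    have hmaps : ∀ x ∈ Ioc (0:ℝ) xε, F x ∈ Ioo (0:ℝ) 1 := by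
      intro x hx
      constructor
      · rw [← hF0]
        exact hFm (mem_Ici.mpr le_rfl) (mem_Ici.mpr hx.1.le) hx.1
      · have : F x ≤ F xε := hFmono (mem_Ici.mpr hx.1.le) (mem_Ici.mpr hxε) hx.2
        rw [hq] at this
        linarith
    have hcont : ContinuousOn (fun x => K (F x)) (Ioc 0 xε) :=
      hKc.comp hFc.continuousOn hmaps
    have hmeas : AEStronglyMeasurable (fun x => K (F x)) (volume.restrict (Ioc 0 xε)) :=
      hcont.aestronglyMeasurable measurableSet_Ioc
    refine Integrable.mono' (g := fun _ => K (1 - ε) / ε)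
      (integrableOn_const measure_Ioc_lt_top.ne) hmeas ?_
    refine (ae_restrict_iff' measurableSet_Ioc).mpr (ae_of_all _ fun x hx => ?_)
    have hFx := hmaps x hx
    have hFxle : F x ≤ 1 - ε := by
      have : F x ≤ F xε := hFmono (mem_Ici.mpr hx.1.le) (mem_Ici.mpr hxε) hx.2
      rwa [hq] at this
    have h1 : 0 ≤ K (F x) := hKnn _ ⟨hFx.1.le, hFx.2.le⟩
    have h2 : ε * K (F x) ≤ K (1 - ε) := hupper _ ⟨hFx.1.le, hFxle⟩
    rw [Real.norm_eq_abs, abs_of_nonneg h1, le_div_iff₀ hε0]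
    linarith
  -- profit for the full layer
  have hG : γ * EX ≤ ∫ x in (0:ℝ)..xε, K (F x) := by
    have h := hG0
    rw [Profit, integral_K_deriv_Iab K F hxε] at h
    linarith
  -- main part
  intro b hb0 hbxε
  have hbmem : b ∈ Ici (0:ℝ) := mem_Ici.mpr hb0
  have hFb0 : 0 ≤ F b := hF_nonneg b hb0
  have hFble : F b ≤ 1 - ε := by
    have : F b ≤ F xε := hFmono hbmem (mem_Ici.mpr hxε) hbxε.le
    rwa [hq] at this
  have hII0b : IntervalIntegrable (fun x => K (F x)) volume 0 b :=
    (intervalIntegrable_iff_integrableOn_Ioc_of_le hb0).mpr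
      (hInt.mono_set (Ioc_subset_Ioc_right hbxε.le))
  have hIIbxε : IntervalIntegrable (fun x => K (F x)) volume b xε :=
    (intervalIntegrable_iff_integrableOn_Ioc_of_le hbxε.le).mpr
      (hInt.mono_set (Ioc_subset_Ioc_left hb0))
  have hVaR : VaRRet (Iab 0 b) xε = xε - b := by
    simp only [VaRRet, Iab, sub_zero]
    rw [max_eq_left hxε, min_eq_right hbxε.le]
  have hprofit : Profit γ EX K F (Iab 0 b) = γ * EX - ∫ x in (0:ℝ)..b, K (F x) := by
    rw [Profit, integral_K_deriv_Iab K F hb0]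
  refine ⟨by rw [hprofit, hVaR], ?_⟩
  have hxb : 0 < xε - b := by linarith
  rw [div_le_iff₀ hxb]
  by_cases hcase : γr ≤ K (F b)
  · -- K ∘ F ≥ γr on [0, b]
    have hlow : ∀ x ∈ Icc (0:ℝ) b, (fun _ => γr) x ≤ K (F x) := by
      intro x hx
      refine hL3 (F b) ⟨hFb0, by linarith⟩ hcase (F x)
        ⟨hF_nonneg x hx.1, hFmono (mem_Ici.mpr hx.1) hbmem hx.2⟩
    have hmono := intervalIntegral.integral_mono_on hb0
      (intervalIntegrable_const (c := γr)) hII0b hlow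
    rw [intervalIntegral.integral_const, smul_eq_mul] at hmono
    have hEXxε : γ * EX ≤ γr * xε := by
      nlinarith
    nlinarith [hmono]
  · push_neg at hcase
    have hb0' : 0 < b := by
      rcases eq_or_lt_of_le hb0 with h | h
      · exfalso
        rw [← h, hF0, hK0] at hcase
        exact lt_irrefl _ hcase
      · exact h
    have hFb0' : 0 < F b := by
      rw [← hF0]
      exact hFm (mem_Ici.mpr le_rfl) hbmem hb0'
    have hhigh : ∀ x ∈ Icc b xε, K (F x) ≤ (fun _ => γr) x := by
      intro x hx
      refine hL4 (F b) hFb0' (by linarith) hcase.le (F x)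
        ⟨hFmono hbmem (mem_Ici.mpr (hb0.trans hx.1)) hx.1, hF_le1 x (hb0.trans hx.1)⟩
    have hmono := intervalIntegral.integral_mono_on hbxε.le hIIbxε
      (intervalIntegrable_const (c := γr)) hhigh
    rw [intervalIntegral.integral_const, smul_eq_mul] at hmono
    have hsplit : (∫ x in (0:ℝ)..b, K (F x)) + ∫ x in b..xε, K (F x)
        = ∫ x in (0:ℝ)..xε, K (F x) :=
      intervalIntegral.integral_add_adjacent_intervals hII0b hIIbxε
    nlinarith [hmono]
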